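/- Both 2×2 Hermitian matrices tr_A((σ⊗I)|ψ⟩⟨ψ|) and tr_A((σ⊗I)D_A(|ψ⟩⟨ψ|)) have negative determinant whenever p_0, p_1 > 0, sin(θ/2) ≠ 0 and σ₀₀ ≠ 0; their determinants equal −p_0p_1 sin²(θ/2)(σ₀₀² + |σ₀₁|²) and −p_0p_1 sin²(θ/2) σ₀₀² respectively, so each matrix has one positive and one negative eigenvalue and its trace norm equals the difference of its eigenvalues. -/

import Mathlib

open Matrix Kronecker BigOperators Finset
open scoped ComplexOrder

noncomputable section

/-- Trace norm of a complex square matrix: `tr √(AᴴA)`. -/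
def traceNorm {n : Type*} [Fintype n] [DecidableEq n] (A : Matrix n n ℂ) : ℝ :=
  (((Matrix.posSemidef_conjTranspose_mul_self A).1.eigenvectorUnitary : Matrix n n ℂ) *
    Matrix.diagonal (((↑) : ℝ → ℂ) ∘ Real.sqrt ∘ (Matrix.posSemidef_conjTranspose_mul_self A).1.eigenvalues) *
    (star (Matrix.posSemidef_conjTranspose_mul_self A).1.eigenvectorUnitary : Matrix n n ℂ)).trace.re

/-- Partial trace over the first tensor factor. -/
def ptraceA {A B : Type*} [Fintype A] (M : Matrix (A × B) (A × B) ℂ) : Matrix B B ℂ :=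
  fun b b' => ∑ a, M (a, b) (a, b')

/-- Outer product `|v⟩⟨v|`. -/
def outer {n : Type*} (v : n → ℂ) : Matrix n n ℂ := Matrix.vecMulVec v (star v)

lemma cayley (M : Matrix (Fin 2) (Fin 2) ℂ) :
    M * M = M.trace • M - M.det • (1 : Matrix (Fin 2) (Fin 2) ℂ) := by
  ext i j
  fin_cases i <;> fin_cases j <;>
    simp [Matrix.mul_apply, Fin.sum_univ_two, Matrix.trace_fin_two, Matrix.det_fin_two,
      Matrix.one_apply] <;> ring

lemma traceNorm_two (M : Matrix (Fin 2) (Fin 2) ℂ) (hM : M.IsHermitian)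
    (ε1 ε2 : ℝ) (h1 : 0 < ε1) (h2 : ε2 < 0)
    (hdet : M.det = ((ε1 * ε2 : ℝ) : ℂ)) (htr : M.trace = ((ε1 + ε2 : ℝ) : ℂ)) :
    traceNorm M = ε1 - ε2 := by
  have hc : (0:ℝ) < ε1 - ε2 := by linarith
  have hP := Matrix.posSemidef_conjTranspose_mul_self M
  have htn : traceNorm M = ∑ i, Real.sqrt (hP.1.eigenvalues i) := by
    rw [traceNorm, Matrix.trace_mul_cycle,
      Unitary.star_mul_self_of_mem hP.1.eigenvectorUnitary.2, Matrix.one_mul,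
      Matrix.trace_diagonal]
    simp
  have hCH := cayley M
  rw [hdet, htr] at hCH
  have htrMM : (Mᴴ * M).trace = ((ε1^2 + ε2^2 : ℝ) : ℂ) := by
    rw [hM.eq, hCH, Matrix.trace_sub, Matrix.trace_smul, Matrix.trace_smul, Matrix.trace_one, htr]
    simp only [smul_eq_mul, Fintype.card_fin, Nat.cast_ofNat]
    push_cast; ring
  have hdetMM : (Mᴴ * M).det = (((ε1 * ε2)^2 : ℝ) : ℂ) := by
    rw [hM.eq, Matrix.det_mul, hdet]; push_cast; ring
  rw [hP.1.trace_eq_sum_eigenvalues, Fin.sum_univ_two] at htrMM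
  rw [hP.1.det_eq_prod_eigenvalues, Fin.prod_univ_two] at hdetMM
  have ht : hP.1.eigenvalues 0 + hP.1.eigenvalues 1 = ε1^2 + ε2^2 := by
    have h := congrArg Complex.re htrMM; rw [Complex.ofReal_re] at h; simpa using h
  have hd : hP.1.eigenvalues 0 * hP.1.eigenvalues 1 = (ε1 * ε2)^2 := by
    have h := congrArg Complex.re hdetMM; rw [Complex.ofReal_re] at h; simpa using h
  have hl0 := hP.eigenvalues_nonneg 0
  have hl1 := hP.eigenvalues_nonneg 1
  rw [htn, Fin.sum_univ_two]
  set a := Real.sqrt (hP.1.eigenvalues 0) with ha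
  set b := Real.sqrt (hP.1.eigenvalues 1) with hb
  have ha0 : 0 ≤ a := Real.sqrt_nonneg _
  have hb0 : 0 ≤ b := Real.sqrt_nonneg _
  have ha2 : a^2 = hP.1.eigenvalues 0 := Real.sq_sqrt hl0
  have hb2 : b^2 = hP.1.eigenvalues 1 := Real.sq_sqrt hl1
  have hp : 0 < -(ε1 * ε2) := by nlinarith
  have hab : a * b = -(ε1 * ε2) := by
    have h3 : (a * b - -(ε1 * ε2)) * (a * b + -(ε1 * ε2)) = 0 := by
      rw [← ha2, ← hb2] at hd; nlinarith
    rcases mul_eq_zero.mp h3 with h | h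
    · linarith
    · nlinarith [mul_nonneg ha0 hb0]
  have h4 : (a + b - (ε1 - ε2)) * (a + b + (ε1 - ε2)) = 0 := by
    rw [← ha2, ← hb2] at ht; nlinarith
  rcases mul_eq_zero.mp h4 with h | h
  · linarith
  · nlinarith

lemma exists_eps (M : Matrix (Fin 2) (Fin 2) ℂ) (hM : M.IsHermitian) (T D : ℝ)
    (htr : M.trace = ((T:ℝ):ℂ)) (hdet : M.det = ((D:ℝ):ℂ)) (hD : D < 0) :
    ∃ ε1 ε2 : ℝ, 0 < ε1 ∧ ε2 < 0 ∧ M.det = ((ε1 * ε2 : ℝ) : ℂ) ∧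
      M.trace = ((ε1 + ε2 : ℝ) : ℂ) ∧ traceNorm M = ε1 - ε2 := by
  set s : ℝ := Real.sqrt (T^2 - 4*D) with hsdef
  have hs0 : 0 ≤ s := Real.sqrt_nonneg _
  have hs2 : s^2 = T^2 - 4*D := Real.sq_sqrt (by nlinarith)
  refine ⟨(T + s)/2, (T - s)/2, by nlinarith, by nlinarith, ?_, ?_, ?_⟩
  · rw [hdet]; congr 1; nlinarith
  · rw [htr]; congr 1; ring
  · exact traceNorm_two M hM _ _ (by nlinarith) (by nlinarith)
      (by rw [hdet]; congr 1; nlinarith) (by rw [htr]; congr 1; ring)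

/-- both `tr_A((σ⊗I)ψ)` and `tr_A((σ⊗I)D_A(ψ))` have determinants
`−p0p1 sin²(θ/2)(σ00²+|σ01|²)` and `−p0p1 sin²(θ/2)σ00²`; when these are negative,
each matrix has one positive and one negative eigenvalue and its trace norm is the
difference of the eigenvalues. -/
theorem negative_determinants_of_conditional_operators
    (p0 p1 θ φR : ℝ) (hp0 : 0 < p0) (hp1 : 0 < p1) (hpsum : p0 + p1 = 1)
    (σ : Matrix (Fin 2) (Fin 2) ℂ) (hσ : σ.IsHermitian) (hσtr : σ.trace = 0)
    (hs : Real.sin (θ / 2) ≠ 0) (h00 : σ 0 0 ≠ 0) :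
    let ψ : Fin 2 × Fin 2 → ℂ := fun x =>
      if x = ((0 : Fin 2), (0 : Fin 2)) then (Real.sqrt p0 : ℂ)
      else if x = ((1 : Fin 2), (0 : Fin 2)) then (Real.sqrt p1 : ℂ) * (Real.cos (θ / 2) : ℂ)
      else if x = ((1 : Fin 2), (1 : Fin 2)) then
        (Real.sqrt p1 : ℂ) * Complex.exp (φR * Complex.I) * (Real.sin (θ / 2) : ℂ)
      else 0
    let ρ : Matrix (Fin 2 × Fin 2) (Fin 2 × Fin 2) ℂ := Matrix.vecMulVec ψ (star ψ)
    let Dρ : Matrix (Fin 2 × Fin 2) (Fin 2 × Fin 2) ℂ :=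
      ∑ k, (Matrix.single k k (1 : ℂ) ⊗ₖ (1 : Matrix (Fin 2) (Fin 2) ℂ)) * ρ *
        (Matrix.single k k (1 : ℂ) ⊗ₖ (1 : Matrix (Fin 2) (Fin 2) ℂ))
    let Mψ : Matrix (Fin 2) (Fin 2) ℂ :=
      ptraceA ((σ ⊗ₖ (1 : Matrix (Fin 2) (Fin 2) ℂ)) * ρ)
    let MD : Matrix (Fin 2) (Fin 2) ℂ :=
      ptraceA ((σ ⊗ₖ (1 : Matrix (Fin 2) (Fin 2) ℂ)) * Dρ)
    (Mψ.det = -(((p0 * p1 * Real.sin (θ / 2) ^ 2 *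
        ((σ 0 0).re ^ 2 + ‖σ 0 1‖ ^ 2) : ℝ)) : ℂ)) ∧
    (MD.det = -(((p0 * p1 * Real.sin (θ / 2) ^ 2 * (σ 0 0).re ^ 2 : ℝ)) : ℂ)) ∧
    (Mψ.det.re < 0) ∧ (MD.det.re < 0) ∧
    (∃ ε1 ε2 : ℝ, 0 < ε1 ∧ ε2 < 0 ∧ Mψ.det = ((ε1 * ε2 : ℝ) : ℂ) ∧
      Mψ.trace = ((ε1 + ε2 : ℝ) : ℂ) ∧ traceNorm Mψ = ε1 - ε2) ∧
    (∃ ε1 ε2 : ℝ, 0 < ε1 ∧ ε2 < 0 ∧ MD.det = ((ε1 * ε2 : ℝ) : ℂ) ∧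
      MD.trace = ((ε1 + ε2 : ℝ) : ℂ) ∧ traceNorm MD = ε1 - ε2) := by
  intro ψ ρ Dρ Mψ MD
  -- basic scalar facts
  have h0 : (Real.sqrt p0 : ℂ) * (Real.sqrt p0 : ℂ) = (p0:ℂ) := by
    rw [← Complex.ofReal_mul, Real.mul_self_sqrt hp0.le]
  have h1 : (Real.sqrt p1 : ℂ) * (Real.sqrt p1 : ℂ) = (p1:ℂ) := by
    rw [← Complex.ofReal_mul, Real.mul_self_sqrt hp1.le]
  have hEc : (starRingEnd ℂ) (Complex.exp (φR*Complex.I)) = Complex.exp (-(φR*Complex.I)) := by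
    rw [← Complex.exp_conj]; congr 1; simp [Complex.conj_ofReal]
  have hE : Complex.exp (φR*Complex.I) * (starRingEnd ℂ) (Complex.exp (φR*Complex.I)) = 1 := by
    rw [hEc, ← Complex.exp_add, add_neg_cancel, Complex.exp_zero]
  have hc00 : (starRingEnd ℂ) (σ 0 0) = σ 0 0 := hσ.apply 0 0
  have hc11 : (starRingEnd ℂ) (σ 1 1) = σ 1 1 := hσ.apply 1 1
  have hs10 : (starRingEnd ℂ) (σ 0 1) = σ 1 0 := hσ.apply 1 0
  have hs01 : (starRingEnd ℂ) (σ 1 0) = σ 0 1 := hσ.apply 0 1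
  have h11 : σ 1 1 = -σ 0 0 := by
    have := hσtr; rw [Matrix.trace_fin_two] at this; linear_combination this
  have hr : σ 0 0 = (((σ 0 0).re : ℝ) : ℂ) := (Complex.conj_eq_iff_re.mp hc00).symm
  have hrne : (σ 0 0).re ≠ 0 := by
    intro h; apply h00; rw [hr, h, Complex.ofReal_zero]
  have hb : σ 0 1 * σ 1 0 = ((‖σ 0 1‖ ^ 2 : ℝ) : ℂ) := by
    rw [← hs10, Complex.mul_conj]
    norm_cast
    exact (Complex.sq_norm _).symm
  have hre01 : σ 0 1 + σ 1 0 = ((2 * (σ 0 1).re : ℝ) : ℂ) := by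
    rw [← hs10]; exact Complex.add_conj _
  -- entries of Mψ
  have e00 : Mψ 0 0 = σ 0 0 * (p0:ℂ) +
      (σ 0 1 + σ 1 0) * ((Real.sqrt p0:ℂ) * (Real.sqrt p1:ℂ)) * (Real.cos (θ/2):ℂ) +
      σ 1 1 * (p1:ℂ) * (Real.cos (θ/2):ℂ)^2 := by
    simp only [Mψ, ρ, ψ, ptraceA, Matrix.mul_apply, Fintype.sum_prod_type, Fin.sum_univ_two,
      Matrix.kroneckerMap_apply, Matrix.vecMulVec_apply, Matrix.one_apply, Pi.star_apply,
      Prod.mk.injEq, one_ne_zero, zero_ne_one, and_true, and_false, true_and, false_and,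
      and_self, mul_one, mul_zero, zero_mul, add_zero, zero_add, Complex.star_def, _root_.map_mul, _root_.map_zero,
      Complex.conj_ofReal, reduceIte, ite_true, ite_false]
    linear_combination (σ 0 0) * h0 + (σ 1 1) * (Real.cos (θ/2):ℂ)^2 * h1
  have e01 : Mψ 0 1 = (σ 1 0 * ((Real.sqrt p0:ℂ) * (Real.sqrt p1:ℂ)) +
      σ 1 1 * (p1:ℂ) * (Real.cos (θ/2):ℂ)) *
      (starRingEnd ℂ) (Complex.exp (φR*Complex.I)) * (Real.sin (θ/2):ℂ) := by
    simp only [Mψ, ρ, ψ, ptraceA, Matrix.mul_apply, Fintype.sum_prod_type, Fin.sum_univ_two,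
      Matrix.kroneckerMap_apply, Matrix.vecMulVec_apply, Matrix.one_apply, Pi.star_apply,
      Prod.mk.injEq, one_ne_zero, zero_ne_one, and_true, and_false, true_and, false_and,
      and_self, mul_one, mul_zero, zero_mul, add_zero, zero_add, Complex.star_def, _root_.map_mul, _root_.map_zero,
      Complex.conj_ofReal, reduceIte, ite_true, ite_false]
    linear_combination (σ 1 1) * (Real.cos (θ/2):ℂ) *
      (starRingEnd ℂ) (Complex.exp (φR*Complex.I)) * (Real.sin (θ/2):ℂ) * h1
  have e10 : Mψ 1 0 = (σ 0 1 * ((Real.sqrt p0:ℂ) * (Real.sqrt p1:ℂ)) +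
      σ 1 1 * (p1:ℂ) * (Real.cos (θ/2):ℂ)) *
      Complex.exp (φR*Complex.I) * (Real.sin (θ/2):ℂ) := by
    simp only [Mψ, ρ, ψ, ptraceA, Matrix.mul_apply, Fintype.sum_prod_type, Fin.sum_univ_two,
      Matrix.kroneckerMap_apply, Matrix.vecMulVec_apply, Matrix.one_apply, Pi.star_apply,
      Prod.mk.injEq, one_ne_zero, zero_ne_one, and_true, and_false, true_and, false_and,
      and_self, mul_one, mul_zero, zero_mul, add_zero, zero_add, Complex.star_def, _root_.map_mul, _root_.map_zero,
      Complex.conj_ofReal, reduceIte, ite_true, ite_false]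
    linear_combination (σ 1 1) * (Real.cos (θ/2):ℂ) *
      Complex.exp (φR*Complex.I) * (Real.sin (θ/2):ℂ) * h1
  have e11 : Mψ 1 1 = σ 1 1 * (p1:ℂ) * (Real.sin (θ/2):ℂ)^2 := by
    simp only [Mψ, ρ, ψ, ptraceA, Matrix.mul_apply, Fintype.sum_prod_type, Fin.sum_univ_two,
      Matrix.kroneckerMap_apply, Matrix.vecMulVec_apply, Matrix.one_apply, Pi.star_apply,
      Prod.mk.injEq, one_ne_zero, zero_ne_one, and_true, and_false, true_and, false_and,
      and_self, mul_one, mul_zero, zero_mul, add_zero, zero_add, Complex.star_def, _root_.map_mul, _root_.map_zero,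
      Complex.conj_ofReal, reduceIte, ite_true, ite_false]
    linear_combination (σ 1 1) * (Real.sin (θ/2):ℂ)^2 * Complex.exp (φR*Complex.I) *
        (starRingEnd ℂ) (Complex.exp (φR*Complex.I)) * h1 +
      (σ 1 1) * (Real.sin (θ/2):ℂ)^2 * (p1:ℂ) * hE
  -- entries of MD
  have m00 : MD 0 0 = σ 0 0 * (p0:ℂ) + σ 1 1 * (p1:ℂ) * (Real.cos (θ/2):ℂ)^2 := by
    simp only [MD, Dρ, ρ, ψ, ptraceA, Matrix.mul_apply, Fintype.sum_prod_type, Fin.sum_univ_two,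
      Matrix.sum_apply, Matrix.add_apply, Matrix.single, Matrix.of_apply,
      Matrix.kroneckerMap_apply, Matrix.vecMulVec_apply, Matrix.one_apply, Pi.star_apply,
      Prod.mk.injEq, one_ne_zero, zero_ne_one, and_true, and_false, true_and, false_and,
      and_self, mul_one, mul_zero, zero_mul, add_zero, zero_add, Complex.star_def,
      _root_.map_mul, _root_.map_zero, Complex.conj_ofReal, reduceIte, ite_true, ite_false]
    linear_combination (σ 0 0) * h0 + (σ 1 1) * (Real.cos (θ/2):ℂ)^2 * h1
  have m01 : MD 0 1 = σ 1 1 * (p1:ℂ) * (Real.cos (θ/2):ℂ) *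
      (starRingEnd ℂ) (Complex.exp (φR*Complex.I)) * (Real.sin (θ/2):ℂ) := by
    simp only [MD, Dρ, ρ, ψ, ptraceA, Matrix.mul_apply, Fintype.sum_prod_type, Fin.sum_univ_two,
      Matrix.sum_apply, Matrix.add_apply, Matrix.single, Matrix.of_apply,
      Matrix.kroneckerMap_apply, Matrix.vecMulVec_apply, Matrix.one_apply, Pi.star_apply,
      Prod.mk.injEq, one_ne_zero, zero_ne_one, and_true, and_false, true_and, false_and,
      and_self, mul_one, mul_zero, zero_mul, add_zero, zero_add, Complex.star_def,
      _root_.map_mul, _root_.map_zero, Complex.conj_ofReal, reduceIte, ite_true, ite_false]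
    linear_combination (σ 1 1) * (Real.cos (θ/2):ℂ) *
      (starRingEnd ℂ) (Complex.exp (φR*Complex.I)) * (Real.sin (θ/2):ℂ) * h1
  have m10 : MD 1 0 = σ 1 1 * (p1:ℂ) * (Real.cos (θ/2):ℂ) *
      Complex.exp (φR*Complex.I) * (Real.sin (θ/2):ℂ) := by
    simp only [MD, Dρ, ρ, ψ, ptraceA, Matrix.mul_apply, Fintype.sum_prod_type, Fin.sum_univ_two,
      Matrix.sum_apply, Matrix.add_apply, Matrix.single, Matrix.of_apply,
      Matrix.kroneckerMap_apply, Matrix.vecMulVec_apply, Matrix.one_apply, Pi.star_apply,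
      Prod.mk.injEq, one_ne_zero, zero_ne_one, and_true, and_false, true_and, false_and,
      and_self, mul_one, mul_zero, zero_mul, add_zero, zero_add, Complex.star_def,
      _root_.map_mul, _root_.map_zero, Complex.conj_ofReal, reduceIte, ite_true, ite_false]
    linear_combination (σ 1 1) * (Real.cos (θ/2):ℂ) *
      Complex.exp (φR*Complex.I) * (Real.sin (θ/2):ℂ) * h1
  have m11 : MD 1 1 = σ 1 1 * (p1:ℂ) * (Real.sin (θ/2):ℂ)^2 := by
    simp only [MD, Dρ, ρ, ψ, ptraceA, Matrix.mul_apply, Fintype.sum_prod_type, Fin.sum_univ_two,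
      Matrix.sum_apply, Matrix.add_apply, Matrix.single, Matrix.of_apply,
      Matrix.kroneckerMap_apply, Matrix.vecMulVec_apply, Matrix.one_apply, Pi.star_apply,
      Prod.mk.injEq, one_ne_zero, zero_ne_one, and_true, and_false, true_and, false_and,
      and_self, mul_one, mul_zero, zero_mul, add_zero, zero_add, Complex.star_def,
      _root_.map_mul, _root_.map_zero, Complex.conj_ofReal, reduceIte, ite_true, ite_false]
    linear_combination (σ 1 1) * (Real.sin (θ/2):ℂ)^2 * Complex.exp (φR*Complex.I) *
        (starRingEnd ℂ) (Complex.exp (φR*Complex.I)) * h1 +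
      (σ 1 1) * (Real.sin (θ/2):ℂ)^2 * (p1:ℂ) * hE
  -- derived scalar facts
  have hcs : (Real.cos (θ/2):ℂ)^2 + (Real.sin (θ/2):ℂ)^2 = 1 := by
    norm_cast; exact Real.cos_sq_add_sin_sq _
  have hre01' : σ 0 1 + σ 1 0 = 2 * (((σ 0 1).re : ℝ) : ℂ) := by rw [hre01]; push_cast; ring
  have hb' : σ 0 1 * σ 1 0 = ((‖σ 0 1‖ : ℝ) : ℂ)^2 := by rw [hb]; push_cast; ring
  -- determinants
  have hstepM : Mψ.det = (Real.sin (θ/2):ℂ)^2 * (p0:ℂ) * (p1:ℂ) *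
      (σ 1 1 * σ 0 0 - σ 0 1 * σ 1 0) := by
    rw [Matrix.det_fin_two, e00, e01, e10, e11]
    linear_combination (-(Real.sin (θ/2):ℂ)^2 *
        (σ 1 0 * ((Real.sqrt p0:ℂ) * (Real.sqrt p1:ℂ)) + σ 1 1 * (p1:ℂ) * (Real.cos (θ/2):ℂ)) *
        (σ 0 1 * ((Real.sqrt p0:ℂ) * (Real.sqrt p1:ℂ)) + σ 1 1 * (p1:ℂ) * (Real.cos (θ/2):ℂ))) * hE +
      (-(Real.sin (θ/2):ℂ)^2 * σ 0 1 * σ 1 0 * ((Real.sqrt p1:ℂ) * (Real.sqrt p1:ℂ))) * h0 +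
      (-(Real.sin (θ/2):ℂ)^2 * σ 0 1 * σ 1 0 * (p0:ℂ)) * h1
  have detM : Mψ.det = -(((p0 * p1 * Real.sin (θ / 2) ^ 2 *
      ((σ 0 0).re ^ 2 + ‖σ 0 1‖ ^ 2) : ℝ)) : ℂ) := by
    rw [hstepM]
    push_cast [-Complex.ofReal_sin, -Complex.ofReal_cos]
    linear_combination ((Real.sin (θ/2):ℂ)^2 * (p0:ℂ) * (p1:ℂ) * σ 0 0) * h11 +
      (-(Real.sin (θ/2):ℂ)^2 * (p0:ℂ) * (p1:ℂ) * (σ 0 0 + (((σ 0 0).re : ℝ):ℂ))) * hr +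
      (-(Real.sin (θ/2):ℂ)^2 * (p0:ℂ) * (p1:ℂ)) * hb'
  have hstepD : MD.det = (Real.sin (θ/2):ℂ)^2 * (p0:ℂ) * (p1:ℂ) * (σ 1 1 * σ 0 0) := by
    rw [Matrix.det_fin_two, m00, m01, m10, m11]
    linear_combination (-(σ 1 1)^2 * (p1:ℂ)^2 * (Real.cos (θ/2):ℂ)^2 *
      (Real.sin (θ/2):ℂ)^2) * hE
  have detD : MD.det = -(((p0 * p1 * Real.sin (θ / 2) ^ 2 * (σ 0 0).re ^ 2 : ℝ)) : ℂ) := by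
    rw [hstepD]
    push_cast [-Complex.ofReal_sin, -Complex.ofReal_cos]
    linear_combination ((Real.sin (θ/2):ℂ)^2 * (p0:ℂ) * (p1:ℂ) * σ 0 0) * h11 +
      (-(Real.sin (θ/2):ℂ)^2 * (p0:ℂ) * (p1:ℂ) * (σ 0 0 + (((σ 0 0).re : ℝ):ℂ))) * hr
  -- traces
  have trM : Mψ.trace = (((σ 0 0).re * (p0 - p1) +
      2 * (σ 0 1).re * (Real.sqrt p0 * Real.sqrt p1 * Real.cos (θ/2)) : ℝ) : ℂ) := by
    rw [Matrix.trace_fin_two, e00, e11]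
    push_cast [-Complex.ofReal_sin, -Complex.ofReal_cos]
    linear_combination ((Real.sqrt p0:ℂ) * (Real.sqrt p1:ℂ) * (Real.cos (θ/2):ℂ)) * hre01' +
      (σ 1 1 * (p1:ℂ)) * hcs + ((p0:ℂ) - (p1:ℂ)) * hr + (p1:ℂ) * h11
  have trD : MD.trace = (((σ 0 0).re * (p0 - p1) : ℝ) : ℂ) := by
    rw [Matrix.trace_fin_two, m00, m11]
    push_cast [-Complex.ofReal_sin, -Complex.ofReal_cos]
    linear_combination (σ 1 1 * (p1:ℂ)) * hcs + ((p0:ℂ) - (p1:ℂ)) * hr + (p1:ℂ) * h11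
  -- hermitian
  have hermM : Mψ.IsHermitian := by
    show _ᴴ = _
    ext i j
    fin_cases i <;> fin_cases j <;>
      simp only [Matrix.conjTranspose_apply, Complex.star_def, Fin.isValue, Fin.zero_eta,
        Fin.mk_one]
    · rw [e00]
      simp only [_root_.map_add, _root_.map_mul, _root_.map_pow, Complex.conj_ofReal,
        Complex.conj_conj, hc00, hc11, hs10, hs01]
      try ring
    · rw [e10, e01]
      simp only [_root_.map_add, _root_.map_mul, _root_.map_pow, Complex.conj_ofReal,
        Complex.conj_conj, hc00, hc11, hs10, hs01]
      try ring
    · rw [e01, e10]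
      simp only [_root_.map_add, _root_.map_mul, _root_.map_pow, Complex.conj_ofReal,
        Complex.conj_conj, hc00, hc11, hs10, hs01]
      try ring
    · rw [e11]
      simp only [_root_.map_add, _root_.map_mul, _root_.map_pow, Complex.conj_ofReal,
        Complex.conj_conj, hc00, hc11, hs10, hs01]
      try ring
  have hermD : MD.IsHermitian := by
    show _ᴴ = _
    ext i j
    fin_cases i <;> fin_cases j <;>
      simp only [Matrix.conjTranspose_apply, Complex.star_def, Fin.isValue, Fin.zero_eta,
        Fin.mk_one]
    · rw [m00]
      simp only [_root_.map_add, _root_.map_mul, _root_.map_pow, Complex.conj_ofReal,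
        Complex.conj_conj, hc00, hc11, hs10, hs01]
      try ring
    · rw [m10, m01]
      simp only [_root_.map_add, _root_.map_mul, _root_.map_pow, Complex.conj_ofReal,
        Complex.conj_conj, hc00, hc11, hs10, hs01]
      try ring
    · rw [m01, m10]
      simp only [_root_.map_add, _root_.map_mul, _root_.map_pow, Complex.conj_ofReal,
        Complex.conj_conj, hc00, hc11, hs10, hs01]
      try ring
    · rw [m11]
      simp only [_root_.map_add, _root_.map_mul, _root_.map_pow, Complex.conj_ofReal,
        Complex.conj_conj, hc00, hc11, hs10, hs01]
      try ring
  -- positivity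
  have hPM : 0 < p0 * p1 * Real.sin (θ / 2) ^ 2 * ((σ 0 0).re ^ 2 + ‖σ 0 1‖ ^ 2) :=
    mul_pos (mul_pos (mul_pos hp0 hp1) (pow_two_pos_of_ne_zero hs))
      (add_pos_of_pos_of_nonneg (pow_two_pos_of_ne_zero hrne) (sq_nonneg _))
  have hPD : 0 < p0 * p1 * Real.sin (θ / 2) ^ 2 * (σ 0 0).re ^ 2 :=
    mul_pos (mul_pos (mul_pos hp0 hp1) (pow_two_pos_of_ne_zero hs))
      (pow_two_pos_of_ne_zero hrne)
  have detM' : Mψ.det = ((-(p0 * p1 * Real.sin (θ / 2) ^ 2 *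
      ((σ 0 0).re ^ 2 + ‖σ 0 1‖ ^ 2)) : ℝ) : ℂ) := by
    rw [detM]; push_cast [-Complex.ofReal_sin, -Complex.ofReal_cos]; ring
  have detD' : MD.det = ((-(p0 * p1 * Real.sin (θ / 2) ^ 2 * (σ 0 0).re ^ 2) : ℝ) : ℂ) := by
    rw [detD]; push_cast [-Complex.ofReal_sin, -Complex.ofReal_cos]; ring
  refine ⟨detM, detD, ?_, ?_, ?_, ?_⟩
  · rw [detM']; rw [Complex.ofReal_re]; linarith
  · rw [detD']; rw [Complex.ofReal_re]; linarith
  · exact exists_eps Mψ hermM _ _ trM detM' (by linarith)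
  · exact exists_eps MD hermD _ _ trD detD' (by linarith)
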